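/- If x₀ is an odd number written as x₀ = 2^(m₀)·k₀ + 1 with m₀ ≥ 1 and k₀ odd, and if along the orbit of x₀ under Q each successive odd value obtained by this process has odd part greater than 1 (i.e. the process never produces k_p = 1), then the orbit grows without bound: for every p ∈ ℕ there exists an index n with Q^[n](x₀) ≥ 3^(p+1)·x₀. In particular such an orbit is unbounded. -/

import Mathlib

/-- The divide-or-choose-2 rule: `Q n = n / 2` if `n` is even,
`Q n = n * (n - 1) / 2` (i.e. `n` choose 2) if `n` is odd. -/
def Q (n : ℕ) : ℕ := if Even n then n / 2 else n * (n - 1) / 2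

lemma Q_even (a : ℕ) : Q (2 * a) = a := by
  simp [Q, even_two_mul a]

lemma Q_pow (j a : ℕ) : Q^[j] (2 ^ j * a) = a := by
  induction j generalizing a with
  | zero => simp
  | succ j ih =>
    rw [Function.iterate_succ_apply]
    have h : 2 ^ (j + 1) * a = 2 * (2 ^ j * a) := by ring
    rw [h, Q_even, ih]

lemma Q_odd {x : ℕ} (hx : Odd x) : Q x = x * (x - 1) / 2 := by
  rw [Q, if_neg (by simpa using hx)]

lemma Q_step (m k : ℕ) (hm : 1 ≤ m) (hk : Odd k) :
    Q^[m] (2 ^ m * k + 1) = k * (2 ^ m * k + 1) := by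
  obtain ⟨m', rfl⟩ : ∃ m', m = m' + 1 := ⟨m - 1, by omega⟩
  set x := 2 ^ (m' + 1) * k + 1 with hxdef
  have hxodd : Odd x := by
    refine ⟨2 ^ m' * k, ?_⟩
    rw [hxdef, pow_succ]; ring
  have hQx : Q x = 2 ^ m' * (k * x) := by
    rw [Q_odd hxodd]
    have h1 : x - 1 = 2 ^ (m' + 1) * k := by simp [hxdef]
    rw [h1]
    have h2 : x * (2 ^ (m' + 1) * k) = 2 * (2 ^ m' * (k * x)) := by
      rw [pow_succ]; ring
    rw [h2, Nat.mul_div_cancel_left _ (by norm_num)]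
  rw [Function.iterate_succ_apply, hQx, Q_pow]

/-- For an odd value `x = 2^m * k + 1` with `m ≥ 1` and `k` odd, the process of the
paper produces `k = 1` exactly when `x = 2^m + 1`, i.e. when `x - 1` is a power of `2`.
The hypothesis that the process never produces `k_p = 1` says that no odd value of the
orbit is of the form `2^m + 1`. -/
theorem stmt_16 (x₀ m₀ k₀ : ℕ) (hm₀ : 1 ≤ m₀) (hk₀ : Odd k₀)
    (hx₀ : x₀ = 2 ^ m₀ * k₀ + 1)
    (hproc : ∀ n : ℕ, Odd (Q^[n] x₀) → ∀ m : ℕ, Q^[n] x₀ ≠ 2 ^ m + 1) :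
    ∀ p : ℕ, ∃ n : ℕ, 3 ^ (p + 1) * x₀ ≤ Q^[n] x₀ := by
  have hk0pos : 1 ≤ k₀ := hk₀.pos
  have h2m : 2 ≤ 2 ^ m₀ := by
    calc 2 = 2 ^ 1 := by norm_num
    _ ≤ 2 ^ m₀ := Nat.pow_le_pow_right (by norm_num) hm₀
  have hx3 : 3 ≤ x₀ := by
    have : 2 ≤ 2 ^ m₀ * k₀ := le_trans h2m (Nat.le_mul_of_pos_right _ hk0pos)
    omega
  have hodd0 : Odd x₀ := by
    obtain ⟨m', rfl⟩ : ∃ m', m₀ = m' + 1 := ⟨m₀ - 1, by omega⟩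
    exact ⟨2 ^ m' * k₀, by rw [hx₀, pow_succ]; ring⟩
  have key : ∀ p, ∃ n, Odd (Q^[n] x₀) ∧ 3 ^ p * x₀ ≤ Q^[n] x₀ := by
    intro p
    induction p with
    | zero => exact ⟨0, hodd0, by simp⟩
    | succ p ih =>
      obtain ⟨n, hodd, hge⟩ := ih
      set y := Q^[n] x₀ with hy
      have h3p : x₀ ≤ 3 ^ p * x₀ := Nat.le_mul_of_pos_left _ (Nat.pow_pos (by norm_num : 0 < 3))
      have hy3 : 3 ≤ y := le_trans hx3 (le_trans h3p hge)
      obtain ⟨m, k, hk2, hdecomp⟩ :=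
        Nat.exists_eq_pow_mul_and_not_dvd (n := y - 1) (by omega) 2 (by norm_num)
      have hkodd : Odd k := Nat.odd_iff.mpr (by omega)
      have hm1 : 1 ≤ m := by
        by_contra h
        have hm0 : m = 0 := by omega
        rw [hm0, pow_zero, one_mul] at hdecomp
        obtain ⟨t, ht⟩ := hodd
        obtain ⟨s, hs⟩ := hkodd
        omega
      have hyeq : y = 2 ^ m * k + 1 := by omega
      have hk1 : k ≠ 1 := by
        intro h
        exact hproc n hodd m (by rw [← hy, hyeq, h, mul_one])
      have hk3 : 3 ≤ k := by
        obtain ⟨s, hs⟩ := hkodd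
        omega
      have hstep : Q^[n + m] x₀ = k * y := by
        rw [add_comm, Function.iterate_add_apply, ← hy, hyeq, Q_step m k hm1 hkodd, ← hyeq]
      refine ⟨n + m, ?_, ?_⟩
      · rw [hstep, hyeq]
        exact hkodd.mul (by exact ⟨2 ^ (m - 1) * k, by
          obtain ⟨m', rfl⟩ : ∃ m', m = m' + 1 := ⟨m - 1, by omega⟩
          simp [pow_succ]; ring⟩)
      · rw [hstep]
        calc 3 ^ (p + 1) * x₀ = 3 * (3 ^ p * x₀) := by ring
        _ ≤ 3 * y := by exact Nat.mul_le_mul_left 3 hge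
        _ ≤ k * y := Nat.mul_le_mul_right y hk3
  intro p
  obtain ⟨n, _, h⟩ := key (p + 1)
  exact ⟨n, h⟩
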